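/- arXiv:1305.2744 — 5 statements merged into one kernel-verified Lean document; each statement's English description precedes it below -/
import Mathlib

section
/- Every trace μ ∈ M(E,I) admits a Foata normal form: a factorization μ = F₁F₂…F_h where each F_k is a product of pairwise-independent distinct letters (written in a fixed total order on E), and for each k and each letter a in F_{k+1} there exists a letter b in F_k with (a,b) ∉ I. -/
/-- One elementary transposition of adjacent independent letters. -/
def TraceStep {E : Type} (I : E → E → Prop) (w₁ w₂ : List E) : Prop :=
  ∃ u v a b, I a b ∧ w₁ = u ++ a :: b :: v ∧ w₂ = u ++ b :: a :: v

/-- Trace equivalence: the equivalence relation generated by transposing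
adjacent independent letters. -/
def TraceEquiv {E : Type} (I : E → E → Prop) : List E → List E → Prop :=
  Relation.EqvGen (TraceStep I)

/-- A step: a nonempty word of pairwise independent distinct letters written in
increasing order. -/
def IsStep {E : Type} [LT E] (I : E → E → Prop) (c : List E) : Prop :=
  c ≠ [] ∧ c.Pairwise (· < ·) ∧ c.Pairwise I

/-- The Foata conditions for a factorization into steps. -/
def IsFoata {E : Type} [LT E] (I : E → E → Prop) (L : List (List E)) : Prop :=
  (∀ c ∈ L, IsStep I c) ∧
  L.Chain' (fun c₁ c₂ => ∀ a ∈ c₂, ∃ b ∈ c₁, ¬ I a b)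

/-- A parallel process: a factorization into nonempty blocks of pairwise
independent letters. -/
def IsParProc {E : Type} (I : E → E → Prop) (M : List (List E)) : Prop :=
  ∀ c ∈ M, c ≠ [] ∧ c.Pairwise I

/-- Replace each letter `e` of a word by `τ e` copies of the corresponding
unit-time small instruction. -/
def expandWord {E : Type} (τ : E → ℕ) (w : List E) : List E :=
  (w.map fun e => List.replicate (τ e) e).flatten

section Foata

variable {E : Type} [LinearOrder E]

/-- Insert into a sorted list. -/
def sinsert (a : E) : List E → List E
  | [] => [a]
  | b :: l => if a < b then a :: b :: l else b :: sinsert a l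

set_option linter.unusedSectionVars false

lemma sinsert_perm (a : E) (l : List E) : List.Perm (sinsert a l) (a :: l) := by
  induction l with
  | nil => simp [sinsert]
  | cons b t ih =>
    simp only [sinsert]
    split
    · exact List.Perm.refl _
    · exact (ih.cons b).trans (List.Perm.swap a b t)

lemma mem_sinsert {x a : E} {l : List E} : x ∈ sinsert a l ↔ x = a ∨ x ∈ l := by
  simpa using (sinsert_perm a l).mem_iff

lemma sinsert_ne_nil (a : E) (l : List E) : sinsert a l ≠ [] := by
  cases l with
  | nil => simp [sinsert]
  | cons b t => simp only [sinsert]; split <;> simp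

lemma sinsert_sorted {a : E} {l : List E} (hs : l.Pairwise (· < ·)) (ha : a ∉ l) :
    (sinsert a l).Pairwise (· < ·) := by
  induction l with
  | nil => simp [sinsert]
  | cons b t ih =>
    rw [List.pairwise_cons] at hs
    simp only [sinsert]
    split
    · rename_i hab
      rw [List.pairwise_cons]
      refine ⟨?_, List.pairwise_cons.2 hs⟩
      intro x hx
      rcases List.mem_cons.1 hx with rfl | hx
      · exact hab
      · exact hab.trans (hs.1 x hx)
    · rename_i hab
      rw [List.pairwise_cons]
      refine ⟨?_, ih hs.2 (fun h => ha (List.mem_cons_of_mem _ h))⟩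
      intro x hx
      rcases mem_sinsert.1 hx with rfl | hx
      · rcases lt_trichotomy x b with h | h | h
        · exact absurd h hab
        · exact absurd h.symm (by intro hh; exact ha (by simp [hh]))
        · exact h
      · exact hs.1 x hx

lemma sinsert_eq_append (a : E) (l : List E) :
    ∃ l₁ l₂, sinsert a l = l₁ ++ a :: l₂ ∧ l = l₁ ++ l₂ := by
  induction l with
  | nil => exact ⟨[], [], rfl, rfl⟩
  | cons b t ih =>
    simp only [sinsert]
    split
    · exact ⟨[], b :: t, rfl, rfl⟩
    · obtain ⟨t₁, t₂, h1, h2⟩ := ih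
      exact ⟨b :: t₁, t₂, by simp [h1], by simp [h2]⟩

variable {I : E → E → Prop}

lemma TraceStep.append_left {u v : List E} (x : List E) (h : TraceStep I u v) :
    TraceStep I (x ++ u) (x ++ v) := by
  obtain ⟨p, q, a, b, hI, h1, h2⟩ := h
  exact ⟨x ++ p, q, a, b, hI, by simp [h1], by simp [h2]⟩

lemma TraceStep.append_right {u v : List E} (y : List E) (h : TraceStep I u v) :
    TraceStep I (u ++ y) (v ++ y) := by
  obtain ⟨p, q, a, b, hI, h1, h2⟩ := h
  exact ⟨p, q ++ y, a, b, hI, by simp [h1], by simp [h2]⟩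

lemma TraceEquiv.append_left {u v : List E} (x : List E) (h : TraceEquiv I u v) :
    TraceEquiv I (x ++ u) (x ++ v) := by
  induction h with
  | rel _ _ h => exact Relation.EqvGen.rel _ _ (h.append_left x)
  | refl _ => exact Relation.EqvGen.refl _
  | symm _ _ _ ih => exact Relation.EqvGen.symm _ _ ih
  | trans _ _ _ _ _ ih1 ih2 => exact Relation.EqvGen.trans _ _ _ ih1 ih2

lemma TraceEquiv.append_right {u v : List E} (y : List E) (h : TraceEquiv I u v) :
    TraceEquiv I (u ++ y) (v ++ y) := by
  induction h with
  | rel _ _ h => exact Relation.EqvGen.rel _ _ (h.append_right y)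
  | refl _ => exact Relation.EqvGen.refl _
  | symm _ _ _ ih => exact Relation.EqvGen.symm _ _ ih
  | trans _ _ _ _ _ ih1 ih2 => exact Relation.EqvGen.trans _ _ _ ih1 ih2

lemma te_move (a : E) (r : List E) :
    ∀ l : List E, (∀ b ∈ l, I a b) → TraceEquiv I (a :: (l ++ r)) (l ++ a :: r) := by
  intro l
  induction l with
  | nil => intro _; exact Relation.EqvGen.refl _
  | cons b t ih =>
    intro hl
    have step : TraceStep I (a :: b :: (t ++ r)) (b :: a :: (t ++ r)) :=
      ⟨[], t ++ r, a, b, hl b (by simp), rfl, rfl⟩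
    refine Relation.EqvGen.trans _ _ _ (Relation.EqvGen.rel _ _ step) ?_
    have := (ih (fun x hx => hl x (by simp [hx]))).append_left [b]
    simpa [TraceEquiv] using this

lemma te_move_mid (a : E) (x l r : List E) (hl : ∀ b ∈ l, I a b) :
    TraceEquiv I (x ++ (a :: (l ++ r))) (x ++ (l ++ (a :: r))) :=
  (te_move a r l hl).append_left x

open Classical in
/-- Foata insertion of a letter at the end of a Foata normal form. -/
noncomputable def ins (I : E → E → Prop) (a : E) : List (List E) → List (List E)
  | [] => [[a]]
  | c :: L =>
    if ∃ b ∈ L.flatten, ¬ I a b then c :: ins I a L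
    else if ∃ b ∈ c, ¬ I a b then
      match L with
      | [] => [c, [a]]
      | d :: L' => c :: sinsert a d :: L'
    else sinsert a c :: L

lemma step_sinsert (hsym : Symmetric I) {a : E} {c : List E}
    (hc : IsStep I c) (hall : ∀ b ∈ c, I a b) (hax : a ∉ c) :
    IsStep I (sinsert a c) := by
  refine ⟨sinsert_ne_nil a c, sinsert_sorted hc.2.1 hax, ?_⟩
  rw [List.Perm.pairwise_iff (fun {x y} h => hsym h) (sinsert_perm a c)]
  exact List.pairwise_cons.2 ⟨hall, hc.2.2⟩

lemma ins_spec (hirr : Irreflexive I) (hsym : Symmetric I) (a : E) :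
    ∀ L : List (List E), IsFoata I L →
      IsFoata I (ins I a L) ∧
      TraceEquiv I (ins I a L).flatten (L.flatten ++ [a]) ∧
      ((∃ b ∈ L.flatten, ¬ I a b) → (ins I a L).head? = L.head?) := by
  intro L
  induction L with
  | nil =>
    intro _
    refine ⟨⟨?_, ?_⟩, ?_, ?_⟩
    · intro c hc
      simp only [ins, List.mem_singleton] at hc
      subst hc
      exact ⟨by simp, by simp, by simp⟩
    · simp [ins, List.Chain']
    · simp only [ins]; simpa [TraceEquiv] using Relation.EqvGen.refl (r := TraceStep I) [a]
    · simp
  | cons c L ih =>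
    intro hF
    obtain ⟨hsteps, hchain⟩ := hF
    by_cases h1 : ∃ b ∈ L.flatten, ¬ I a b
    · -- dependency strictly later: recurse
      have hins : ins I a (c :: L) = c :: ins I a L := by
        simp only [ins]; rw [if_pos h1]
      obtain ⟨d, L', rfl⟩ : ∃ d L', L = d :: L' := by
        cases L with
        | nil => simp at h1
        | cons d L' => exact ⟨d, L', rfl⟩
      have hFL : IsFoata I (d :: L') :=
        ⟨fun x hx => hsteps x (List.mem_cons_of_mem _ hx), hchain.tail⟩
      obtain ⟨⟨ihs, ihc⟩, ih2, ih3⟩ := ih hFL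
      rw [hins]
      refine ⟨⟨?_, ?_⟩, ?_, ?_⟩
      · intro x hx
        rcases List.mem_cons.1 hx with rfl | hx
        · exact hsteps x (by simp)
        · exact ihs x hx
      · rw [List.Chain', List.isChain_cons]
        refine ⟨?_, ihc⟩
        intro y hy
        rw [ih3 h1] at hy
        simp only [List.head?_cons, Option.mem_some_iff] at hy
        subst hy
        exact (List.isChain_cons_cons.1 hchain).1
      · have := ih2.append_left c
        have e1 : (c :: ins I a (d :: L')).flatten = c ++ (ins I a (d :: L')).flatten := by simp
        have e2 : ((c :: d :: L').flatten ++ [a]) = c ++ ((d :: L').flatten ++ [a]) := by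
          simp [List.append_assoc]
        rw [e1, e2]
        exact this
      · intro _; rfl
    · push_neg at h1
      by_cases h2 : ∃ b ∈ c, ¬ I a b
      · cases L with
        | nil =>
          have hins : ins I a [c] = [c, [a]] := by
            simp only [ins]; rw [if_neg (by simp), if_pos h2]
          rw [hins]
          refine ⟨⟨?_, ?_⟩, ?_, ?_⟩
          · intro x hx
            simp only [List.mem_cons, List.not_mem_nil, or_false] at hx
            rcases hx with rfl | rfl
            · exact hsteps x (by simp)
            · exact ⟨by simp, by simp, by simp⟩
          · refine List.isChain_cons_cons.2 ⟨?_, by simp⟩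
            intro x hx
            simp only [List.mem_singleton] at hx
            subst hx
            exact h2
          · simpa [TraceEquiv] using Relation.EqvGen.refl (r := TraceStep I) (c ++ [a])
          · intro _; rfl
        | cons d L' =>
          have hins : ins I a (c :: d :: L') = c :: sinsert a d :: L' := by
            simp only [ins]; rw [if_neg (by push_neg; exact h1), if_pos h2]
          have hallL : ∀ b ∈ (d :: L').flatten, I a b := h1
          have halld : ∀ b ∈ d, I a b := fun b hb => hallL b (by simp [hb])
          have had : a ∉ d := fun h => hirr a (halld a h)
          have hstepd : IsStep I d := hsteps d (by simp)
          rw [hins]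
          refine ⟨⟨?_, ?_⟩, ?_, ?_⟩
          · intro x hx
            simp only [List.mem_cons] at hx
            rcases hx with rfl | rfl | hx
            · exact hsteps x (by simp)
            · exact step_sinsert hsym hstepd halld had
            · exact hsteps x (by simp [hx])
          · rw [List.Chain', List.isChain_cons_cons] at hchain ⊢
            obtain ⟨hcd, hchain⟩ := hchain
            constructor
            · intro x hx
              rcases mem_sinsert.1 hx with rfl | hx
              · exact h2
              · exact hcd x hx
            · rw [List.isChain_cons] at hchain ⊢
              refine ⟨?_, hchain.2⟩
              intro y hy x hx
              obtain ⟨b, hb, hbx⟩ := hchain.1 y hy x hx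
              exact ⟨b, mem_sinsert.2 (Or.inr hb), hbx⟩
          · obtain ⟨d₁, d₂, he1, he2⟩ := sinsert_eq_append a d
            have hmove := te_move_mid (I := I) a (c ++ d₁) (d₂ ++ L'.flatten) [] ?hyp
            case hyp =>
              intro b hb
              rcases List.mem_append.1 hb with hb | hb
              · exact halld b (he2 ▸ List.mem_append.2 (Or.inr hb))
              · exact hallL b (by simp [hb])
            have e1 : (c :: sinsert a d :: L').flatten
                = (c ++ d₁) ++ (a :: ((d₂ ++ L'.flatten) ++ [])) := by
              simp [he1, List.append_assoc]
            have e2 : ((c :: d :: L').flatten ++ [a])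
                = (c ++ d₁) ++ ((d₂ ++ L'.flatten) ++ (a :: [])) := by
              simp [he2, List.append_assoc]
            rw [e1, e2]
            exact hmove
          · intro _; rfl
      · have hn1 : ¬ ∃ b ∈ L.flatten, ¬ I a b := by push_neg; exact h1
        have hins : ins I a (c :: L) = sinsert a c :: L := by
          simp only [ins]; rw [if_neg hn1, if_neg h2]
        push_neg at h2
        have hac : a ∉ c := fun h => hirr a (h2 a h)
        rw [hins]
        refine ⟨⟨?_, ?_⟩, ?_, ?_⟩
        · intro x hx
          simp only [List.mem_cons] at hx
          rcases hx with rfl | hx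
          · exact step_sinsert hsym (hsteps c (by simp)) h2 hac
          · exact hsteps x (by simp [hx])
        · rw [List.Chain', List.isChain_cons] at hchain ⊢
          refine ⟨?_, hchain.2⟩
          intro y hy x hx
          obtain ⟨b, hb, hbx⟩ := hchain.1 y hy x hx
          exact ⟨b, mem_sinsert.2 (Or.inr hb), hbx⟩
        · obtain ⟨c₁, c₂, he1, he2⟩ := sinsert_eq_append a c
          have hmove := te_move_mid (I := I) a c₁ (c₂ ++ L.flatten) [] ?hyp
          case hyp =>
            intro b hb
            rcases List.mem_append.1 hb with hb | hb
            · exact h2 b (he2 ▸ List.mem_append.2 (Or.inr hb))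
            · exact h1 b hb
          · have e1 : (sinsert a c :: L).flatten = c₁ ++ (a :: ((c₂ ++ L.flatten) ++ [])) := by
              simp [he1, List.append_assoc]
            have e2 : ((c :: L).flatten ++ [a]) = c₁ ++ ((c₂ ++ L.flatten) ++ (a :: [])) := by
              simp [he2, List.append_assoc]
            rw [e1, e2]
            exact hmove
        · intro hex
          exfalso
          obtain ⟨b, hb, hnb⟩ := hex
          rw [List.flatten_cons, List.mem_append] at hb
          rcases hb with hb | hb
          · exact hnb (h2 b hb)
          · exact hnb (h1 b hb)

end Foata

/-- every trace admits a Foata normal form. -/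
theorem foata_exists
    {E : Type} [LinearOrder E] [Fintype E]
    (I : E → E → Prop) (hirr : Irreflexive I) (hsym : Symmetric I)
    (w : List E) :
    ∃ L : List (List E), IsFoata I L ∧ TraceEquiv I L.flatten w := by
  induction w using List.reverseRecOn with
  | nil => exact ⟨[], ⟨by simp, by simp [List.Chain']⟩, Relation.EqvGen.refl _⟩
  | append_singleton w a ih =>
    obtain ⟨L, hL, he⟩ := ih
    obtain ⟨h1, h2, -⟩ := ins_spec hirr hsym a L hL
    exact ⟨ins I a L, h1, Relation.EqvGen.trans _ _ _ h2 (he.append_right [a])⟩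
end

section
/- The height of the Foata normal form of a trace μ equals the minimum number of steps over all factorizations of μ into steps, where a step is a trace of pairwise-independent letters. Equivalently, the Foata normal form realizes a parallel process of minimum length among all parallel processes realizing μ. -/
open Classical in
/-- Update of the height profile by one letter. -/
noncomputable def updH {E : Type} [Fintype E] (I : E → E → Prop) (h : E → ℕ) (a : E) : E → ℕ :=
  fun b => if b = a then (Finset.univ.sup fun c => if I c a then 0 else h c) + 1 else h b

section Aux
variable {E : Type} [Fintype E] {I : E → E → Prop}

open Classical

lemma le_updH (hirr : Irreflexive I) (h : E → ℕ) (a : E) : ∀ b, h b ≤ updH I h a b := by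
  intro b
  unfold updH
  split
  · rename_i heq
    subst heq
    have hle : (if I b b then 0 else h b)
        ≤ Finset.univ.sup fun c => if I c b then 0 else h c :=
      Finset.le_sup (f := fun c => if I c b then 0 else h c) (Finset.mem_univ b)
    rw [if_neg (hirr b)] at hle
    omega
  · exact le_refl _

lemma le_foldl (hirr : Irreflexive I) :
    ∀ (w : List E) (h : E → ℕ) (b : E), h b ≤ (w.foldl (updH I) h) b := by
  intro w
  induction w with
  | nil => intro h b; exact le_refl _
  | cons a w ih =>
    intro h b
    exact le_trans (le_updH hirr h a b) (ih (updH I h a) b)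

lemma updH_comm (hirr : Irreflexive I) (hsym : Symmetric I) {a b : E} (hab : I a b)
    (h : E → ℕ) : updH I (updH I h a) b = updH I (updH I h b) a := by
  have hne : a ≠ b := fun e => hirr a (e ▸ hab)
  have hsup : ∀ (x y : E) (X : ℕ), I x y →
      (Finset.univ.sup fun d => if I d y then 0 else if d = x then X else h d)
        = Finset.univ.sup fun d => if I d y then 0 else h d := by
    intro x y X hxy
    apply Finset.sup_congr rfl
    intro d _
    by_cases hd : I d y
    · simp [hd]
    · have hdx : d ≠ x := by rintro rfl; exact hd hxy
      simp [hd, hdx]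
  funext c
  simp only [updH]
  split_ifs with h1 h2 h2
  · exact absurd (h2.symm.trans h1) hne
  · rw [hsup a b _ hab]
  · rw [hsup b a _ (hsym hab)]
  · rfl

lemma step_inv (hirr : Irreflexive I) (hsym : Symmetric I) {w₁ w₂ : List E}
    (hs : TraceStep I w₁ w₂) (h : E → ℕ) :
    w₁.foldl (updH I) h = w₂.foldl (updH I) h := by
  obtain ⟨u, v, a, b, hab, rfl, rfl⟩ := hs
  simp only [List.foldl_append, List.foldl_cons]
  rw [updH_comm hirr hsym hab]

lemma equiv_inv (hirr : Irreflexive I) (hsym : Symmetric I) {w₁ w₂ : List E}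
    (he : TraceEquiv I w₁ w₂) (h : E → ℕ) :
    w₁.foldl (updH I) h = w₂.foldl (updH I) h := by
  induction he with
  | rel _ _ hs => exact step_inv hirr hsym hs h
  | refl _ => rfl
  | symm _ _ _ ih => exact ih.symm
  | trans _ _ _ _ _ ih₁ ih₂ => exact ih₁.trans ih₂

lemma block_bound (K : ℕ) :
    ∀ (c : List E) (h : E → ℕ), c.Pairwise I →
      (∀ b, (∃ d ∈ c, ¬ I b d) → h b ≤ K) →
      (∀ b, h b ≤ K + 1) →
      ∀ b, (c.foldl (updH I) h) b ≤ K + 1 := by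
  intro c
  induction c with
  | nil => intro h _ _ h2 b; exact h2 b
  | cons a c ih =>
    intro h hp h1 h2 b
    have ha : ∀ d ∈ c, I a d := (List.pairwise_cons.mp hp).1
    have hp' : c.Pairwise I := (List.pairwise_cons.mp hp).2
    apply ih (updH I h a) hp'
    · intro x ⟨d, hd, hxd⟩
      have hxa : x ≠ a := by rintro rfl; exact hxd (ha d hd)
      have hx : updH I h a x = h x := by simp [updH, hxa]
      rw [hx]
      exact h1 x ⟨d, List.mem_cons_of_mem a hd, hxd⟩
    · intro x
      by_cases hxa : x = a
      · subst hxa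
        have hx : updH I h x x = (Finset.univ.sup fun d => if I d x then 0 else h d) + 1 := by
          simp [updH]
        rw [hx]
        have hsup : (Finset.univ.sup fun d => if I d x then 0 else h d) ≤ K := by
          apply Finset.sup_le
          intro d _
          by_cases hdx : I d x
          · simp [hdx]
          · simp only [hdx, if_false]
            exact h1 d ⟨x, List.mem_cons_self, hdx⟩
        omega
      · have hx : updH I h a x = h x := by simp [updH, hxa]
        rw [hx]; exact h2 x

lemma parproc_bound :
    ∀ (M : List (List E)) (h : E → ℕ), (∀ c ∈ M, c.Pairwise I) →
      ∀ b, (M.flatten.foldl (updH I) h) b ≤ Finset.univ.sup h + M.length := by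
  intro M
  induction M with
  | nil =>
    intro h _ b
    simpa using Finset.le_sup (f := h) (Finset.mem_univ b)
  | cons c M ih =>
    intro h hM b
    have hflat : (c :: M).flatten = c ++ M.flatten := rfl
    rw [hflat, List.foldl_append]
    have hstep : ∀ b, (c.foldl (updH I) h) b ≤ Finset.univ.sup h + 1 :=
      block_bound (Finset.univ.sup h) c h (hM c (List.mem_cons_self))
        (fun b _ => Finset.le_sup (f := h) (Finset.mem_univ b))
        (fun b => le_trans (Finset.le_sup (f := h) (Finset.mem_univ b)) (Nat.le_succ _))
    have hsup : Finset.univ.sup (c.foldl (updH I) h) ≤ Finset.univ.sup h + 1 :=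
      Finset.sup_le fun b _ => hstep b
    calc (M.flatten.foldl (updH I) (c.foldl (updH I) h)) b
        ≤ Finset.univ.sup (c.foldl (updH I) h) + M.length :=
          ih _ (fun d hd => hM d (List.mem_cons_of_mem c hd)) b
      _ ≤ Finset.univ.sup h + 1 + M.length := by omega
      _ = Finset.univ.sup h + (c :: M).length := by simp; omega

lemma bump (hirr : Irreflexive I) :
    ∀ (c : List E) (h : E → ℕ) (n : ℕ) (a : E), a ∈ c →
      (∃ b, ¬ I b a ∧ n ≤ h b) → n + 1 ≤ (c.foldl (updH I) h) a := by
  intro c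
  induction c with
  | nil => intro h n a ha; exact absurd ha List.not_mem_nil
  | cons d c ih =>
    intro h n a ha ⟨b, hba, hnb⟩
    rcases List.mem_cons.mp ha with rfl | ha'
    · have hval : n + 1 ≤ updH I h a a := by
        have hx : updH I h a a = (Finset.univ.sup fun x => if I x a then 0 else h x) + 1 := by
          simp [updH]
        rw [hx]
        have hle : (if I b a then 0 else h b)
            ≤ Finset.univ.sup fun x => if I x a then 0 else h x :=
          Finset.le_sup (f := fun x => if I x a then 0 else h x) (Finset.mem_univ b)
        rw [if_neg hba] at hle
        omega
      exact le_trans hval (le_foldl hirr c (updH I h a) a)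
    · exact ih (updH I h d) n a ha' ⟨b, hba, le_trans hnb (le_updH hirr h d b)⟩

lemma foata_aux (hirr : Irreflexive I) (hsym : Symmetric I) :
    ∀ (L : List (List E)) (c₀ : List E) (h : E → ℕ) (n : ℕ),
      List.Chain (fun c₁ c₂ => ∀ a ∈ c₂, ∃ b ∈ c₁, ¬ I a b) c₀ L →
      (∀ a ∈ c₀, n ≤ h a) →
      ∀ a ∈ (c₀ :: L).getLast (List.cons_ne_nil _ _),
        n + L.length ≤ (L.flatten.foldl (updH I) h) a := by
  intro L
  induction L with
  | nil =>
    intro c₀ h n _ hn a ha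
    simp only [List.getLast_singleton] at ha
    simpa using hn a ha
  | cons c₁ L ih =>
    intro c₀ h n hch hn a ha
    obtain ⟨hdep, hch'⟩ := List.isChain_cons_cons.mp hch
    have hflat : (c₁ :: L).flatten = c₁ ++ L.flatten := rfl
    rw [hflat, List.foldl_append]
    have hstep : ∀ a ∈ c₁, n + 1 ≤ (c₁.foldl (updH I) h) a := by
      intro a ha₁
      obtain ⟨b, hb, hnI⟩ := hdep a ha₁
      exact bump hirr c₁ h n a ha₁ ⟨b, fun hI => hnI (hsym hI), hn b hb⟩
    have hlast : (c₀ :: c₁ :: L).getLast (List.cons_ne_nil _ _)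
        = (c₁ :: L).getLast (List.cons_ne_nil _ _) := List.getLast_cons _
    rw [hlast] at ha
    have hres := ih c₁ (c₁.foldl (updH I) h) (n + 1) hch' hstep a ha
    simp only [List.length_cons]
    omega
    
end Aux

/-- the height of the Foata normal form of a trace is the minimum
number of steps over all factorizations of the trace into steps (parallel
processes realizing it). -/
theorem foata_height_is_min
    {E : Type} [LinearOrder E] [Fintype E]
    (I : E → E → Prop) (hirr : Irreflexive I) (hsym : Symmetric I)
    (L : List (List E)) (hL : IsFoata I L) :
    IsLeast {m : ℕ | ∃ M : List (List E), IsParProc I M ∧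
      TraceEquiv I M.flatten L.flatten ∧ M.length = m} L.length := by
  constructor
  · exact ⟨L, fun c hc => ⟨(hL.1 c hc).1, (hL.1 c hc).2.2⟩,
      Relation.EqvGen.refl _, rfl⟩
  · rintro m ⟨M, hM, heq, rfl⟩
    -- The height of `L.flatten` is at least `L.length` …
    have hlow : L.length ≤ Finset.univ.sup (L.flatten.foldl (updH I) (fun _ => 0)) := by
      cases L with
      | nil => simp
      | cons c₀ L' =>
        have hch : List.Chain (fun c₁ c₂ => ∀ a ∈ c₂, ∃ b ∈ c₁, ¬ I a b) c₀ L' := hL.2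
        have hflat : (c₀ :: L').flatten = c₀ ++ L'.flatten := rfl
        have h₀ : ∀ a ∈ c₀, 1 ≤ (c₀.foldl (updH I) (fun _ => 0)) a := by
          intro a ha
          exact bump hirr c₀ (fun _ => 0) 0 a ha ⟨a, hirr a, le_refl 0⟩
        have hres := foata_aux hirr hsym L' c₀ (c₀.foldl (updH I) (fun _ => 0)) 1 hch h₀
        have hmem : (c₀ :: L').getLast (List.cons_ne_nil _ _) ∈ (c₀ :: L') :=
          List.getLast_mem _
        obtain ⟨a, ha⟩ := List.exists_mem_of_ne_nil _ (hL.1 _ hmem).1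
        have := hres a ha
        rw [hflat, List.foldl_append]
        calc (c₀ :: L').length = 1 + L'.length := by simp [Nat.add_comm]
          _ ≤ (L'.flatten.foldl (updH I) (c₀.foldl (updH I) (fun _ => 0))) a := this
          _ ≤ _ := Finset.le_sup (Finset.mem_univ a)
    -- …and the height of `M.flatten` is at most `M.length`.
    have hinv := equiv_inv hirr hsym heq (fun _ => 0)
    have hup : ∀ b, (M.flatten.foldl (updH I) (fun _ => 0)) b ≤ M.length := by
      intro b
      have := parproc_bound M (fun _ => 0) (fun c hc => (hM c hc).2) b
      have hz : Finset.univ.sup (fun _ : E => 0) = 0 :=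
        Nat.le_zero.mp (Finset.sup_le fun _ _ => le_refl 0)
      omega
    calc L.length ≤ Finset.univ.sup (L.flatten.foldl (updH I) (fun _ => 0)) := hlow
      _ = Finset.univ.sup (M.flatten.foldl (updH I) (fun _ => 0)) := by rw [hinv]
      _ ≤ M.length := Finset.sup_le fun b _ => hup b
end

section
/- If all instructions have unit execution time (τ ≡ 1), the minimum execution time of a trace μ on unboundedly many processors equals the height (number of factors) of the Foata normal form of μ. -/
section Aux

variable {E : Type} {I : E → E → Prop}

lemma traceStep_symm (hsym : Symmetric I) {w₁ w₂ : List E}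
    (h : TraceStep I w₁ w₂) : TraceStep I w₂ w₁ := by
  obtain ⟨u, v, a, b, hI, h1, h2⟩ := h
  exact ⟨u, v, b, a, hsym hI, h2, h1⟩

/-- A dependence chain that is a sublist survives one transposition step. -/
lemma chain_sublist_step {w₁ w₂ c : List E}
    (hstep : TraceStep I w₁ w₂) (hc : c.Sublist w₁)
    (hch : c.Chain' (fun a b => ¬ I a b)) : c.Sublist w₂ := by
  obtain ⟨u, v, a, b, hI, h1, h2⟩ := hstep
  subst h1 h2
  obtain ⟨c₁, c₂, rfl, hc₁, hc₂⟩ := List.sublist_append_iff.mp hc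
  have hch₂ : c₂.Chain' (fun a b => ¬ I a b) := (List.isChain_append.mp hch).2.1
  refine List.sublist_append_iff.mpr ⟨c₁, c₂, rfl, hc₁, ?_⟩
  rcases List.sublist_cons_iff.mp hc₂ with h | ⟨c₃, rfl, hc₃⟩
  · exact h.trans ((List.sublist_cons_self a v).cons_cons b)
  · rcases List.sublist_cons_iff.mp hc₃ with h | ⟨c₄, rfl, _⟩
    · exact (h.cons_cons a).trans (List.sublist_cons_self b (a :: v))
    · exact absurd hI (List.isChain_cons_cons.mp hch₂).1

lemma chain_sublist_equiv (hsym : Symmetric I) {w₁ w₂ : List E}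
    (h : TraceEquiv I w₁ w₂) : ∀ {c : List E},
    c.Chain' (fun a b => ¬ I a b) → (c.Sublist w₁ ↔ c.Sublist w₂) := by
  induction h with
  | rel x y hxy =>
    intro c hch
    exact ⟨fun hc => chain_sublist_step hxy hc hch,
      fun hc => chain_sublist_step (traceStep_symm hsym hxy) hc hch⟩
  | refl x => intro c _; rfl
  | symm x y _ ih => intro c hch; exact (ih hch).symm
  | trans x y z _ _ ih₁ ih₂ => intro c hch; exact (ih₁ hch).trans (ih₂ hch)

/-- Any dependence chain in a parallel process meets each block at most once. -/
lemma chain_le_parProc :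
    ∀ (M : List (List E)), IsParProc I M → ∀ c : List E,
    c.Sublist M.flatten → c.Chain' (fun a b => ¬ I a b) →
    c.length ≤ M.length := by
  intro M
  induction M with
  | nil =>
    intro _ c hc _
    simp only [List.flatten_nil, List.sublist_nil] at hc
    simp [hc]
  | cons b M' ih =>
    intro hM c hc hch
    rw [List.flatten_cons] at hc
    obtain ⟨c₁, c₂, rfl, hc₁, hc₂⟩ := List.sublist_append_iff.mp hc
    have hch' := List.isChain_append.mp hch
    have hM' : IsParProc I M' := fun d hd => hM d (List.mem_cons_of_mem b hd)
    have h₂ : c₂.length ≤ M'.length := ih hM' c₂ hc₂ hch'.2.1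
    have h₁ : c₁.length ≤ 1 := by
      match c₁, hch'.1 with
      | [], _ => simp
      | [x], _ => simp
      | x :: y :: t, hch₁ =>
        have hIxy : I x y :=
          (List.pairwise_cons.mp (List.Pairwise.sublist hc₁ (hM b List.mem_cons_self).2)).1
            y List.mem_cons_self
        exact absurd hIxy (List.isChain_cons_cons.mp hch₁).1
    simp only [List.length_append, List.length_cons]
    omega

/-- A Foata normal form contains a dependence chain of full height,
starting in the first block. -/
lemma foata_chain [LT E] (hsym : Symmetric I) :
    ∀ (L : List (List E)), IsFoata I L →
    ∃ c : List E, c.Sublist L.flatten ∧ c.Chain' (fun a b => ¬ I a b) ∧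
      c.length = L.length ∧ (∀ x ∈ c.head?, ∀ bb ∈ L.head?, x ∈ bb) := by
  intro L
  induction L with
  | nil => intro _; exact ⟨[], by simp, List.isChain_nil, by simp, by simp⟩
  | cons b L' ih =>
    intro hL
    have hL' : IsFoata I L' :=
      ⟨fun d hd => hL.1 d (List.mem_cons_of_mem b hd), hL.2.tail⟩
    obtain ⟨c', hsub, hch, hlen, hhead⟩ := ih hL'
    match L', c', hlen with
    | [], [], _ =>
      obtain ⟨x, hx⟩ := List.exists_mem_of_ne_nil b (hL.1 b List.mem_cons_self).1
      refine ⟨[x], ?_, List.isChain_singleton x, by simp, ?_⟩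
      · simpa using (List.singleton_sublist.mpr hx).trans (List.sublist_append_left b [])
      · intro z hz bb hbb
        simp only [List.head?_cons, Option.mem_def, Option.some_inj] at hz hbb
        subst hz; subst hbb; exact hx
    | b' :: L'', y :: c'', hlen =>
      have hdep : ∀ a ∈ b', ∃ z ∈ b, ¬ I a z := (List.isChain_cons_cons.mp hL.2).1
      have hy : y ∈ b' := by
        apply hhead y (by simp) b' (by simp)
      obtain ⟨x, hxb, hnI⟩ := hdep y hy
      refine ⟨x :: y :: c'', ?_, ?_, by simpa using hlen, ?_⟩
      · rw [List.flatten_cons]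
        exact List.Sublist.append (List.singleton_sublist.mpr hxb) hsub
      · exact List.isChain_cons_cons.mpr ⟨fun h => hnI (hsym h), hch⟩
      · intro z hz bb hbb
        simp only [List.head?_cons, Option.mem_def, Option.some_inj] at hz hbb
        subst hz; subst hbb; exact hxb

end Aux


/-- with unit execution times (`τ ≡ 1`), the minimum execution
time of a trace on unboundedly many processors equals the height of its Foata
normal form. -/
theorem min_time_eq_foata_height_of_unit_times
    {E : Type} [LinearOrder E] [Fintype E]
    (I : E → E → Prop) (hirr : Irreflexive I) (hsym : Symmetric I)
    (τ : E → ℕ) (hτ : ∀ e, τ e = 1)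
    (w : List E) (L : List (List E))
    (hL : IsFoata I L) (hLw : TraceEquiv I L.flatten (expandWord τ w)) :
    IsLeast {m : ℕ | ∃ M : List (List E), IsParProc I M ∧
      TraceEquiv I M.flatten (expandWord τ w) ∧ M.length = m} L.length := by
  constructor
  · exact ⟨L, fun c hc => ⟨(hL.1 c hc).1, (hL.1 c hc).2.2⟩, hLw, rfl⟩
  · rintro m ⟨M, hM, hMw, rfl⟩
    have hequiv : TraceEquiv I L.flatten M.flatten :=
      Relation.EqvGen.trans _ _ _ hLw (Relation.EqvGen.symm _ _ hMw)
    obtain ⟨c, hsub, hch, hlen, -⟩ := foata_chain hsym L hL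
    have hsub' : c.Sublist M.flatten := (chain_sublist_equiv hsym hequiv hch).mp hsub
    calc L.length = c.length := hlen.symm
      _ ≤ M.length := chain_le_parProc M hM c hsub' hch
end

section
/- For the trace [(a³bc²)ⁿ] in the trace monoid over E = {a,b,c} with independence relation I = {(a,c),(c,a)}, the Foata normal form is [a][a][a]([b][ac][ac][a])^{n-1}[b][c][c], and its height is 4n + 2. -/
/-- The independence relation on `{a,b,c}` (encoded as `Fin 3` with
`a = 0 < b = 1 < c = 2`): exactly `a` and `c` are independent. -/
def Ipipe : Fin 3 → Fin 3 → Prop :=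
  fun x y => (x = 0 ∧ y = 2) ∨ (x = 2 ∧ y = 0)

/-- The word `(a³bc²)ⁿ`. -/
def pipeWord (n : ℕ) : List (Fin 3) :=
  (List.replicate n ([0, 0, 0, 1, 2, 2] : List (Fin 3))).flatten

/-- The claimed Foata normal form `[a][a][a]([b][ac][ac][a])^{n-1}[b][c][c]`. -/
def pipeFoata (n : ℕ) : List (List (Fin 3)) :=
  [[0], [0], [0]] ++
    (List.replicate (n - 1) ([[1], [0, 2], [0, 2], [0]] : List (List (Fin 3)))).flatten ++
    [[1], [2], [2]]

instance : DecidableRel Ipipe := fun x y =>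
  inferInstanceAs (Decidable ((x = 0 ∧ y = 2) ∨ (x = 2 ∧ y = 0)))

namespace PipeAux

theorem equiv_refl {E : Type} (I : E → E → Prop) (w : List E) : TraceEquiv I w w :=
  Relation.EqvGen.refl w

theorem equiv_trans {E : Type} {I : E → E → Prop} {u v w : List E}
    (h₁ : TraceEquiv I u v) (h₂ : TraceEquiv I v w) : TraceEquiv I u w :=
  Relation.EqvGen.trans _ _ _ h₁ h₂

theorem step_append_left {E : Type} {I : E → E → Prop} {u v : List E} (x : List E)
    (h : TraceStep I u v) : TraceStep I (x ++ u) (x ++ v) := by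
  obtain ⟨p, q, a, b, hI, h1, h2⟩ := h
  exact ⟨x ++ p, q, a, b, hI, by simp [h1], by simp [h2]⟩

theorem step_append_right {E : Type} {I : E → E → Prop} {u v : List E} (x : List E)
    (h : TraceStep I u v) : TraceStep I (u ++ x) (v ++ x) := by
  obtain ⟨p, q, a, b, hI, h1, h2⟩ := h
  exact ⟨p, q ++ x, a, b, hI, by simp [h1], by simp [h2]⟩

theorem equiv_append_left {E : Type} {I : E → E → Prop} {u v : List E} (x : List E)
    (h : TraceEquiv I u v) : TraceEquiv I (x ++ u) (x ++ v) := by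
  induction h with
  | rel a b hab => exact Relation.EqvGen.rel _ _ (step_append_left x hab)
  | refl a => exact Relation.EqvGen.refl _
  | symm a b _ ih => exact Relation.EqvGen.symm _ _ ih
  | trans a b c _ _ ih1 ih2 => exact Relation.EqvGen.trans _ _ _ ih1 ih2

theorem equiv_append_right {E : Type} {I : E → E → Prop} {u v : List E} (x : List E)
    (h : TraceEquiv I u v) : TraceEquiv I (u ++ x) (v ++ x) := by
  induction h with
  | rel a b hab => exact Relation.EqvGen.rel _ _ (step_append_right x hab)
  | refl a => exact Relation.EqvGen.refl _
  | symm a b _ ih => exact Relation.EqvGen.symm _ _ ih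
  | trans a b c _ _ ih1 ih2 => exact Relation.EqvGen.trans _ _ _ ih1 ih2

/-- The key local rearrangement: `bacaca ≡ bccaaa`. -/
theorem key : TraceEquiv Ipipe [1, 0, 2, 0, 2, 0] [1, 2, 2, 0, 0, 0] := by
  have s1 : TraceStep Ipipe [1, 0, 2, 0, 2, 0] [1, 2, 0, 0, 2, 0] :=
    ⟨[1], [0, 2, 0], 0, 2, Or.inl ⟨rfl, rfl⟩, rfl, rfl⟩
  have s2 : TraceStep Ipipe [1, 2, 0, 0, 2, 0] [1, 2, 0, 2, 0, 0] :=
    ⟨[1, 2, 0], [0], 0, 2, Or.inl ⟨rfl, rfl⟩, rfl, rfl⟩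
  have s3 : TraceStep Ipipe [1, 2, 0, 2, 0, 0] [1, 2, 2, 0, 0, 0] :=
    ⟨[1, 2], [0, 0], 0, 2, Or.inl ⟨rfl, rfl⟩, rfl, rfl⟩
  exact Relation.EqvGen.trans _ _ _ (Relation.EqvGen.rel _ _ s1)
    (Relation.EqvGen.trans _ _ _ (Relation.EqvGen.rel _ _ s2) (Relation.EqvGen.rel _ _ s3))

theorem pipeWord_succ (n : ℕ) :
    pipeWord (n + 1) = [0, 0, 0, 1, 2, 2] ++ pipeWord n := by
  simp [pipeWord, List.replicate_succ]

theorem foata_flatten (m : ℕ) :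
    (pipeFoata (m + 1)).flatten =
      [0, 0, 0] ++ ((List.replicate m ([[1], [0, 2], [0, 2], [0]] :
        List (List (Fin 3)))).flatten ++ [[1], [2], [2]]).flatten := by
  simp [pipeFoata]

theorem main_equiv : ∀ m : ℕ,
    TraceEquiv Ipipe (pipeFoata (m + 1)).flatten (pipeWord (m + 1)) := by
  intro m
  induction m with
  | zero =>
    have : (pipeFoata 1).flatten = pipeWord 1 := by decide
    rw [this]; exact equiv_refl _ _
  | succ k ih =>
    set Q := ((List.replicate k ([[1], [0, 2], [0, 2], [0]] :
      List (List (Fin 3)))).flatten ++ [[1], [2], [2]]).flatten with hQ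
    have hF1 : (pipeFoata (k + 1)).flatten = [0, 0, 0] ++ Q := foata_flatten k
    have hF2 : (pipeFoata (k + 2)).flatten = [0, 0, 0] ++ ([1, 0, 2, 0, 2, 0] ++ Q) := by
      have := foata_flatten (k + 1)
      simpa [List.replicate_succ, hQ] using this
    rw [hF2, pipeWord_succ]
    have h1 : TraceEquiv Ipipe ([0, 0, 0] ++ ([1, 0, 2, 0, 2, 0] ++ Q))
        ([0, 0, 0] ++ ([1, 2, 2, 0, 0, 0] ++ Q)) :=
      equiv_append_left _ (equiv_append_right _ key)
    have h2 : ([0, 0, 0] ++ ([1, 2, 2, 0, 0, 0] ++ Q) : List (Fin 3)) =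
        [0, 0, 0, 1, 2, 2] ++ (pipeFoata (k + 1)).flatten := by
      rw [hF1]; simp
    have h3 : TraceEquiv Ipipe ([0, 0, 0, 1, 2, 2] ++ (pipeFoata (k + 1)).flatten)
        ([0, 0, 0, 1, 2, 2] ++ pipeWord (k + 1)) := equiv_append_left _ ih
    exact equiv_trans h1 (h2 ▸ h3)

abbrev R : List (Fin 3) → List (Fin 3) → Prop :=
  fun c₁ c₂ => ∀ a ∈ c₂, ∃ b ∈ c₁, ¬ Ipipe a b

theorem chain_aux : ∀ k : ℕ,
    List.Chain' R ([0] :: ((List.replicate k ([[1], [0, 2], [0, 2], [0]] :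
      List (List (Fin 3)))).flatten ++ [[1], [2], [2]])) := by
  intro k
  induction k with
  | zero =>
    simp only [List.replicate, List.flatten_nil, List.nil_append]
    exact List.IsChain.cons_cons (by decide) (List.IsChain.cons_cons (by decide)
      (List.IsChain.cons_cons (by decide) (List.isChain_singleton _)))
  | succ j ih =>
    rw [List.replicate_succ]
    simp only [List.flatten_cons, List.cons_append, List.append_assoc]
    refine List.IsChain.cons_cons (by decide) (List.IsChain.cons_cons (by decide)
      (List.IsChain.cons_cons (by decide) (List.IsChain.cons_cons (by decide) ?_)))
    simpa [List.Chain'] using ih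

theorem mem_blocks {c : List (Fin 3)} (hc : c ∈ pipeFoata ((n : ℕ) + 1)) :
    c = [0] ∨ c = [1] ∨ c = [2] ∨ c = [0, 2] := by
  simp only [pipeFoata, List.mem_append, List.mem_flatten] at hc
  rcases hc with (h | h) | h
  · simp at h; tauto
  · obtain ⟨l, hl, hcl⟩ := h
    rw [List.eq_of_mem_replicate hl] at hcl
    simp at hcl; tauto
  · simp at h; tauto

theorem foata_ok (m : ℕ) : IsFoata Ipipe (pipeFoata (m + 1)) := by
  constructor
  · intro c hc
    rcases mem_blocks hc with rfl | rfl | rfl | rfl <;> exact ⟨by decide, by decide, by decide⟩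
  · show List.Chain' R _
    unfold pipeFoata
    refine List.IsChain.cons_cons (by decide) (List.IsChain.cons_cons (by decide) ?_)
    simpa [List.Chain'] using chain_aux m

end PipeAux

/-- for `n ≥ 1`, the Foata normal form of the trace `[(a³bc²)ⁿ]`
is `[a][a][a]([b][ac][ac][a])^{n-1}[b][c][c]`, of height `4n + 2`. -/
theorem pipeline_foata_normal_form (n : ℕ) (hn : 1 ≤ n) :
    IsFoata Ipipe (pipeFoata n) ∧
    TraceEquiv Ipipe (pipeFoata n).flatten (pipeWord n) ∧
    (pipeFoata n).length = 4 * n + 2 := by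
  obtain ⟨m, rfl⟩ : ∃ m, n = m + 1 := ⟨n - 1, by omega⟩
  refine ⟨PipeAux.foata_ok m, PipeAux.main_equiv m, ?_⟩
  simp [pipeFoata, List.length_flatten, Function.comp]
  omega
end

section
/- In the graph on S_τ where two vertices are joined by an edge of length 1 whenever one is obtained from the other by simultaneously executing a set of pairwise-independent instructions, the length of the shortest directed path from (s₀,1) to (s,1) equals the minimum execution time, over all traces μ with s₀·μ = s, of a parallel process realizing μ with time function τ. -/
/-- A process (path) in an asynchronous system: a chain of transitions from `s`
to `s'` labelled by the word `w`. -/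
inductive ProcPath {S E : Type} (Tran : S → E → S → Prop) : S → List E → S → Prop
  | nil (s : S) : ProcPath Tran s [] s
  | cons {s s₁ s' : S} {e : E} {w : List E} :
      Tran s e s₁ → ProcPath Tran s₁ w s' → ProcPath Tran s (e :: w) s'

/-- One time unit of the refined system `A_τ`: a state of `A_τ` is a pair of a
state `s ∈ S` and a progress function recording partially executed
pairwise-independent instructions. In one tick, a set `F` of pairwise
independent instructions (each already in progress or newly started and
independent of all in-progress ones) each advance by one progress unit;
instructions reaching `τ` complete and act on the state via `Tran`. -/
def Tick {S E : Type} [DecidableEq E] (Tran : S → E → S → Prop)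
    (I : E → E → Prop) (τ : E → ℕ) (c c' : S × (E → ℕ)) : Prop :=
  ∃ F : Finset E,
    (∀ a ∈ F, ∀ b ∈ F, a ≠ b → I a b) ∧
    (∀ a ∈ F, 0 < c.2 a ∨ ∀ b, 0 < c.2 b → I a b) ∧
    (∀ a ∈ F, c.2 a < τ a) ∧
    (∀ a, c'.2 a = if a ∈ F then (if c.2 a + 1 = τ a then 0 else c.2 a + 1) else c.2 a) ∧
    ∃ l : List E, l.Nodup ∧ l.toFinset = F.filter (fun a => c.2 a + 1 = τ a) ∧
      ProcPath Tran c.1 l c'.1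

/-- `TickN n c c'`: the vertex `c'` of the graph on `S_τ` is reachable from `c`
by a directed path of length `n` (each edge has length 1). -/
def TickN {S E : Type} [DecidableEq E] (Tran : S → E → S → Prop)
    (I : E → E → Prop) (τ : E → ℕ) : ℕ → S × (E → ℕ) → S × (E → ℕ) → Prop
  | 0, c, c' => c' = c
  | n + 1, c, c' => ∃ c₁, Tick Tran I τ c c₁ ∧ TickN Tran I τ n c₁ c'

namespace SP18
set_option linter.unusedSectionVars false
set_option linter.unusedVariables false

open List

variable {S E : Type} [DecidableEq E] {I : E → E → Prop} {τ : E → ℕ}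

local notation "TE" => TraceEquiv I

theorem te_refl (u : List E) : TE u u := Relation.EqvGen.refl u
theorem te_symm {u v : List E} (h : TE u v) : TE v u := Relation.EqvGen.symm _ _ h
theorem te_trans {u v w : List E} (h : TE u v) (h' : TE v w) : TE u w :=
  Relation.EqvGen.trans _ _ _ h h'
theorem te_of_step {u v : List E} (h : TraceStep I u v) : TE u v := Relation.EqvGen.rel _ _ h

theorem te_append_right {u v : List E} (h : TE u v) (w : List E) : TE (u ++ w) (v ++ w) := by
  induction h with
  | rel x y hxy =>
    obtain ⟨p, q, a, b, hab, rfl, rfl⟩ := hxy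
    exact te_of_step ⟨p, q ++ w, a, b, hab, by simp, by simp⟩
  | refl x => exact te_refl _
  | symm x y _ ih => exact te_symm ih
  | trans x y z _ _ ih₁ ih₂ => exact te_trans ih₁ ih₂

theorem te_append_left {u v : List E} (h : TE u v) (w : List E) : TE (w ++ u) (w ++ v) := by
  induction h with
  | rel x y hxy =>
    obtain ⟨p, q, a, b, hab, rfl, rfl⟩ := hxy
    exact te_of_step ⟨w ++ p, q, a, b, hab, by simp, by simp⟩
  | refl x => exact te_refl _
  | symm x y _ ih => exact te_symm ih
  | trans x y z _ _ ih₁ ih₂ => exact te_trans ih₁ ih₂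

theorem te_append {u v x y : List E} (h : TE u v) (h' : TE x y) : TE (u ++ x) (v ++ y) :=
  te_trans (te_append_right h x) (te_append_left h' v)

theorem te_cons {u v : List E} (a : E) (h : TE u v) : TE (a :: u) (a :: v) :=
  te_append_left h [a]

theorem te_perm {u v : List E} (h : TE u v) : u.Perm v := by
  induction h with
  | rel x y hxy =>
    obtain ⟨p, q, a, b, _, rfl, rfl⟩ := hxy
    exact (List.perm_append_left_iff p).2 (List.Perm.swap b a q)
  | refl x => exact Perm.refl x
  | symm x y _ ih => exact ih.symm
  | trans x y z _ _ ih₁ ih₂ => exact ih₁.trans ih₂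

/-- move a letter to the front past independent letters -/
theorem te_move_front (hsym : Symmetric I) {x y : List E} {a : E} (h : ∀ b ∈ x, I a b) :
    TE (x ++ a :: y) (a :: (x ++ y)) := by
  induction x with
  | nil => exact te_refl _
  | cons c x' ih =>
    have h1 : TE (c :: (x' ++ a :: y)) (c :: a :: (x' ++ y)) :=
      te_cons c (ih (fun b hb => h b (mem_cons_of_mem _ hb)))
    exact te_trans h1 (te_of_step ⟨[], x' ++ y, c, a, hsym (h c (mem_cons_self (a := c) (l := x'))), rfl, rfl⟩)

/-- shuffle lemma: permutations of pairwise independent letters are trace equivalent -/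
theorem te_shuffle {u v : List E} (hperm : u.Perm v)
    (h : ∀ a ∈ u, ∀ b ∈ u, a ≠ b → I a b) : TE u v := by
  induction hperm with
  | nil => exact te_refl _
  | cons x p ih =>
    exact te_cons x (ih (fun a ha b hb hab => h a (mem_cons_of_mem _ ha) b (mem_cons_of_mem _ hb) hab))
  | swap x y l =>
    by_cases hxy : x = y
    · subst hxy; exact te_refl _
    · exact te_of_step ⟨[], l, y, x, h y (by simp) x (by simp) (Ne.symm hxy), rfl, rfl⟩
  | trans p₁ p₂ ih₁ ih₂ =>
    refine te_trans (ih₁ h) (ih₂ ?_)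
    intro a ha b hb hab
    exact h a (p₁.mem_iff.2 ha) b (p₁.mem_iff.2 hb) hab

/-! ### Projections -/

/-- projection of a word onto the two letters `a`, `b` -/
def proj (a b : E) (l : List E) : List E := l.filter (fun x => decide (x = a ∨ x = b))

theorem mem_proj {a b x : E} {l : List E} : x ∈ proj a b l ↔ x ∈ l ∧ (x = a ∨ x = b) := by
  simp [proj]

theorem proj_append (a b : E) (u v : List E) :
    proj a b (u ++ v) = proj a b u ++ proj a b v := by
  simp [proj]

theorem proj_cons (a b c : E) (l : List E) :
    proj a b (c :: l) = if c = a ∨ c = b then c :: proj a b l else proj a b l := by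
  by_cases h : c = a ∨ c = b <;> simp [proj, h]

theorem proj_replicate (a b c : E) (n : ℕ) :
    proj a b (List.replicate n c) =
      if c = a ∨ c = b then List.replicate n c else [] := by
  by_cases h : c = a ∨ c = b <;> simp [proj, List.filter_replicate, h]

/-- projections on dependent pairs are invariants of trace equivalence -/
theorem proj_eq_of_te (hirr : Irreflexive I) (hsym : Symmetric I) {a b : E} (hdep : ¬ I a b)
    {u v : List E} (h : TE u v) : proj a b u = proj a b v := by
  induction h with
  | rel x y hxy =>
    obtain ⟨p, q, c, d, hcd, rfl, rfl⟩ := hxy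
    simp only [proj_append, proj_cons]
    by_cases hc : c = a ∨ c = b <;> by_cases hd : d = a ∨ d = b <;>
      simp only [hc, hd, if_true, if_false, ite_true, ite_false]
    exfalso
    have hne : c ≠ d := fun h => hirr c (h ▸ hcd)
    rcases hc with rfl | rfl <;> rcases hd with rfl | rfl
    · exact hne rfl
    · exact hdep hcd
    · exact hdep (hsym hcd)
    · exact hne rfl
  | refl x => rfl
  | symm x y _ ih => exact ih.symm
  | trans x y z _ _ ih₁ ih₂ => exact ih₁.trans ih₂

/-! ### expandWord lemmas -/

theorem expand_nil : expandWord τ ([] : List E) = [] := rfl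

theorem expand_cons (e : E) (w : List E) :
    expandWord τ (e :: w) = List.replicate (τ e) e ++ expandWord τ w := by
  simp [expandWord]

theorem expand_append (u v : List E) :
    expandWord τ (u ++ v) = expandWord τ u ++ expandWord τ v := by
  simp [expandWord]

theorem count_expand (x : E) (w : List E) :
    (expandWord τ w).count x = τ x * w.count x := by
  induction w with
  | nil => simp [expandWord]
  | cons e w ih =>
    rw [expand_cons, List.count_append, ih, List.count_cons, List.count_replicate]
    by_cases h : e = x <;> simp [h, Nat.mul_add, Nat.add_comm]

theorem mem_of_mem_expand {x : E} {w : List E} (h : x ∈ expandWord τ w) : x ∈ w := by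
  rw [← List.count_pos_iff] at h ⊢
  rw [count_expand] at h
  exact Nat.pos_of_ne_zero (fun h0 => by simp [h0] at h)

theorem mem_expand (hτ : ∀ e, 1 ≤ τ e) {x : E} {w : List E} : x ∈ expandWord τ w ↔ x ∈ w := by
  constructor
  · exact mem_of_mem_expand
  · intro h
    rw [← List.count_pos_iff, count_expand]
    rw [← List.count_pos_iff] at h
    exact Nat.mul_pos (hτ x) h

theorem proj_expand (a b : E) (w : List E) :
    proj a b (expandWord τ w) = expandWord τ (proj a b w) := by
  induction w with
  | nil => rfl
  | cons e w ih =>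
    rw [expand_cons, proj_append, proj_replicate, proj_cons, ih]
    by_cases h : e = a ∨ e = b <;> simp [h, expand_cons]

theorem te_expand (hsym : Symmetric I) {u v : List E} (h : TE u v) :
    TE (expandWord τ u) (expandWord τ v) := by
  induction h with
  | rel x y hxy =>
    obtain ⟨p, q, c, d, hcd, rfl, rfl⟩ := hxy
    rw [expand_append, expand_append, expand_cons, expand_cons, expand_cons, expand_cons]
    refine te_append_left (w := expandWord τ p) ?_
    rw [← List.append_assoc, ← List.append_assoc]
    refine te_append_right ?_ (expandWord τ q)
    refine te_shuffle (List.perm_append_comm) ?_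
    intro x hx y hy hxy
    have hx' : x = c ∨ x = d := by
      rcases List.mem_append.1 hx with h' | h'
      · exact Or.inl (List.eq_of_mem_replicate h')
      · exact Or.inr (List.eq_of_mem_replicate h')
    have hy' : y = c ∨ y = d := by
      rcases List.mem_append.1 hy with h' | h'
      · exact Or.inl (List.eq_of_mem_replicate h')
      · exact Or.inr (List.eq_of_mem_replicate h')
    rcases hx' with rfl | rfl <;> rcases hy' with rfl | rfl
    · exact absurd rfl hxy
    · exact hcd
    · exact hsym hcd
    · exact absurd rfl hxy
  | refl x => exact te_refl _
  | symm x y _ ih => exact te_symm ih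
  | trans x y z _ _ ih₁ ih₂ => exact te_trans ih₁ ih₂
/-! ### first occurrence decomposition -/

theorem exists_first_occ {a : E} {l : List E} (h : a ∈ l) :
    ∃ x y, l = x ++ a :: y ∧ a ∉ x := by
  induction l with
  | nil => cases h
  | cons c l ih =>
    by_cases hc : c = a
    · exact ⟨[], l, by simp [hc], by simp⟩
    · have : a ∈ l := by
        rcases List.mem_cons.1 h with h' | h'
        · exact absurd h'.symm hc
        · exact h'
      obtain ⟨x, y, rfl, hax⟩ := ih this
      exact ⟨c :: x, y, rfl, by simp [hax, Ne.symm hc]⟩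

/-- The projection characterization: equal counts + equal projections on all
dependent pairs imply trace equivalence. -/
theorem te_of_proj (hirr : Irreflexive I) (hsym : Symmetric I) :
    ∀ u v : List E, u.Perm v →
    (∀ a b, ¬ I a b → proj a b u = proj a b v) → TE u v := by
  intro u
  induction u with
  | nil => intro v hperm _; rw [hperm.nil_eq]; exact te_refl _
  | cons a u' ih =>
    intro v hperm hproj
    have hav : a ∈ v := hperm.mem_iff.1 (List.mem_cons_self (a := a) (l := u'))
    obtain ⟨x, y, rfl, hax⟩ := exists_first_occ hav
    -- all letters of x are independent of a
    have hxind : ∀ b ∈ x, I a b := by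
      intro b hbx
      by_contra hnI
      have hba : b ≠ a := fun h => hax (h ▸ hbx)
      have hpe := hproj a b hnI
      rw [proj_cons] at hpe
      simp only [if_pos (Or.inl rfl)] at hpe
      rw [proj_append, proj_cons] at hpe
      simp only [if_pos (Or.inl rfl)] at hpe
      -- proj a b x must be nonempty (contains b) but its head must be a
      have hbpx : b ∈ proj a b x := mem_proj.2 ⟨hbx, Or.inr rfl⟩
      obtain ⟨c, t, hct⟩ := List.exists_cons_of_ne_nil (List.ne_nil_of_mem hbpx)
      rw [hct] at hpe
      have : a = c := by simpa using congrArg List.head? hpe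
      have hcx : c ∈ x := (mem_proj.1 (hct ▸ List.mem_cons_self (a := c) (l := t))).1
      exact hax (this ▸ hcx)
    -- peel a to the front of v
    have hpeel : TE (x ++ a :: y) (a :: (x ++ y)) := te_move_front hsym hxind
    -- now recurse
    have hperm' : u'.Perm (x ++ y) := by
      have h1 : (a :: u').Perm (a :: (x ++ y)) := hperm.trans List.perm_middle
      exact h1.cons_inv
    have hproj' : ∀ c d, ¬ I c d → proj c d u' = proj c d (x ++ y) := by
      intro c d hnI
      have hpe := hproj c d hnI
      rw [proj_cons, proj_append, proj_cons] at hpe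
      by_cases hacd : a = c ∨ a = d
      · -- then proj c d x = []
        have hpx : proj c d x = [] := by
          rw [List.eq_nil_iff_forall_not_mem]
          intro z hz
          obtain ⟨hzx, hzcd⟩ := mem_proj.1 hz
          have hIaz := hxind z hzx
          have hza : z ≠ a := fun h => hax (h ▸ hzx)
          rcases hacd with rfl | rfl
          · rcases hzcd with rfl | rfl
            · exact hza rfl
            · exact hnI hIaz
          · rcases hzcd with rfl | rfl
            · exact hnI (hsym hIaz)
            · exact hza rfl
        rw [hpx, if_pos hacd, if_pos hacd] at hpe
        simp only [List.nil_append] at hpe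
        have := List.cons.injEq a (proj c d u') a (proj c d y) ▸ hpe
        rw [proj_append, hpx, List.nil_append]
        exact (List.cons.inj hpe).2
      · rw [if_neg hacd, if_neg hacd] at hpe
        rw [proj_append]
        exact hpe
    have hte' : TE u' (x ++ y) := ih (x ++ y) hperm' hproj'
    exact te_trans (te_cons a hte') (te_symm hpeel)

/-- left cancellation -/
theorem te_cancel_left (hirr : Irreflexive I) (hsym : Symmetric I) {u x y : List E}
    (h : TE (u ++ x) (u ++ y)) : TE x y := by
  refine te_of_proj hirr hsym x y ?_ ?_
  · exact (List.perm_append_left_iff u).1 (te_perm h)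
  · intro a b hnI
    have := proj_eq_of_te hirr hsym hnI h
    rw [proj_append, proj_append] at this
    exact List.append_cancel_left this

/-! ### complete blocks lemma: in `expandWord τ z`, before any occurrence of `a`,
the number of `b`'s is a multiple of `τ b`. -/

theorem count_mod_of_expand_split {a b : E} (hba : b ≠ a) :
    ∀ (z u v : List E), expandWord τ z = u ++ a :: v → u.count b % τ b = 0 := by
  intro z
  induction z with
  | nil => intro u v h; exact absurd h (by simp [expandWord])
  | cons e z ih =>
    intro u v h
    rw [expand_cons] at h
    rcases List.append_eq_append_iff.1 h with ⟨t, ht1, ht2⟩ | ⟨t, ht1, ht2⟩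
    · -- u = replicate (τ e) e ++ t, expandWord τ z = t ++ a :: v
      subst ht1
      rw [List.count_append, List.count_replicate]
      have := ih t v ht2
      by_cases he : e = b
      · subst he; simp [Nat.add_mod, this]
      · simp [he, this]
    · -- replicate (τ e) e = u ++ t, a :: v = t ++ expandWord τ z
      have hue : ∀ x ∈ u, x = e := by
        intro x hx
        exact List.eq_of_mem_replicate (by rw [ht1]; exact List.mem_append_left t hx)
      cases t with
      | nil =>
        -- u = replicate (τ e) e
        rw [List.append_nil] at ht1
        rw [← ht1, List.count_replicate]
        by_cases he : e = b
        · subst he; simp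
        · simp [he]
      | cons c t' =>
        -- c = a and c = e, so e = a; all of u is e = a ≠ b
        have hca : c = a := by
          have := congrArg List.head? ht2
          simp at this
          exact this.symm
        have hce : c = e := List.eq_of_mem_replicate
          (by rw [ht1]; exact List.mem_append_right u (List.mem_cons_self (a := c) (l := t')))
        have hcount : u.count b = 0 := by
          rw [List.count_eq_zero]
          intro hbu
          exact hba ((hue b hbu).trans (hce ▸ hca))
        simp [hcount]
/-! ### ProcPath lemmas -/

variable {Tran : S → E → S → Prop}

theorem pp_append {s s₁ s₂ : S} {u v : List E} (h : ProcPath Tran s u s₁)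
    (h' : ProcPath Tran s₁ v s₂) : ProcPath Tran s (u ++ v) s₂ := by
  induction h with
  | nil s => exact h'
  | cons ht _ ih => exact ProcPath.cons ht (ih h')

theorem pp_append_inv {s s₂ : S} {u v : List E} (h : ProcPath Tran s (u ++ v) s₂) :
    ∃ s₁, ProcPath Tran s u s₁ ∧ ProcPath Tran s₁ v s₂ := by
  induction u generalizing s with
  | nil => exact ⟨s, ProcPath.nil s, h⟩
  | cons e u ih =>
    cases h with
    | cons ht hp =>
      obtain ⟨s₁, h1, h2⟩ := ih hp
      exact ⟨s₁, ProcPath.cons ht h1, h2⟩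

theorem pp_nil_inv {s t : S} (h : ProcPath Tran s [] t) : s = t := by
  cases h; rfl

theorem pp_swap (comm : ∀ a b s s' s'', I a b → Tran s a s' → Tran s' b s'' →
      ∃ s₁, Tran s b s₁ ∧ Tran s₁ a s'')
    {u v : List E} {a b : E} (hab : I a b) {s t : S}
    (h : ProcPath Tran s (u ++ a :: b :: v) t) : ProcPath Tran s (u ++ b :: a :: v) t := by
  induction u generalizing s with
  | nil =>
    cases h with
    | cons hta hp =>
      cases hp with
      | cons htb hp' =>
        obtain ⟨s₁, h1, h2⟩ := comm _ _ _ _ _ hab hta htb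
        exact ProcPath.cons h1 (ProcPath.cons h2 hp')
  | cons e u ih =>
    cases h with
    | cons ht hp => exact ProcPath.cons ht (ih hp)

theorem pp_te_iff (hsym : Symmetric I)
    (comm : ∀ a b s s' s'', I a b → Tran s a s' → Tran s' b s'' →
      ∃ s₁, Tran s b s₁ ∧ Tran s₁ a s'')
    {u v : List E} (h : TE u v) : ∀ s t : S, ProcPath Tran s u t ↔ ProcPath Tran s v t := by
  induction h with
  | rel x y hxy =>
    obtain ⟨p, q, a, b, hab, rfl, rfl⟩ := hxy
    exact fun s t => ⟨pp_swap comm hab, pp_swap comm (hsym hab)⟩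
  | refl x => exact fun s t => Iff.rfl
  | symm x y _ ih => exact fun s t => (ih s t).symm
  | trans x y z _ _ ih₁ ih₂ => exact fun s t => (ih₁ s t).trans (ih₂ s t)

theorem pp_te (hsym : Symmetric I)
    (comm : ∀ a b s s' s'', I a b → Tran s a s' → Tran s' b s'' →
      ∃ s₁, Tran s b s₁ ∧ Tran s₁ a s'')
    {u v : List E} (h : TE u v) {s t : S}
    (hp : ProcPath Tran s u t) : ProcPath Tran s v t :=
  (pp_te_iff hsym comm h s t).1 hp
/-! ### the progress word -/

/-- the word recording partially executed instructions: `p a` copies of each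
`a` in the support list `q` -/
def Pl (p : E → ℕ) (q : List E) : List E := q.flatMap fun a => List.replicate (p a) a

theorem mem_Pl {p : E → ℕ} {q : List E} {x : E} (h : x ∈ Pl p q) : x ∈ q ∧ 0 < p x := by
  rw [Pl, List.mem_flatMap] at h
  obtain ⟨a, ha, hx⟩ := h
  rw [List.mem_replicate] at hx
  obtain ⟨hne, rfl⟩ := hx
  exact ⟨ha, Nat.pos_of_ne_zero hne⟩

theorem count_Pl' {p : E → ℕ} {q : List E} (hnd : q.Nodup) (x : E) :
    (Pl p q).count x = if x ∈ q then p x else 0 := by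
  induction q with
  | nil => simp [Pl]
  | cons c q' ih =>
    rcases List.nodup_cons.1 hnd with ⟨hcq, hnd'⟩
    rw [Pl, List.flatMap_cons, ← Pl, List.count_append, List.count_replicate, ih hnd']
    by_cases hxc : c = x
    · subst hxc
      simp [hcq]
    · by_cases hq : x ∈ q' <;> simp [hxc, hq, List.mem_cons, Ne.symm hxc]

theorem count_Pl {p : E → ℕ} {q : List E} (hnd : q.Nodup) (h0 : ∀ x, 0 < p x ↔ x ∈ q)
    (x : E) : (Pl p q).count x = p x := by
  rw [count_Pl' hnd]
  by_cases hx : x ∈ q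
  · simp [hx]
  · rw [if_neg hx]
    exact (Nat.eq_zero_of_not_pos (fun hp => hx ((h0 x).1 hp))).symm

/-! ### peeling completed letters off the front of a trace -/

theorem peel_expand (hirr : Irreflexive I) (hsym : Symmetric I) (hτ : ∀ e, 1 ≤ τ e) :
    ∀ (l D w' : List E), TE (expandWord τ l ++ D) (expandWord τ w') →
    ∃ w'', TE w' (l ++ w'') ∧ TE D (expandWord τ w'') := by
  intro l
  induction l with
  | nil =>
    intro D w' h
    exact ⟨w', te_refl w', by simpa [expand_nil] using h⟩
  | cons a l' ih =>
    intro D w' h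
    -- a occurs in w'
    have haw : a ∈ w' := by
      have hcount := List.perm_iff_count.1 (te_perm h) a
      rw [List.count_append, count_expand, count_expand, List.count_cons_self] at hcount
      have h1 : 1 ≤ τ a * (l'.count a + 1) := Nat.le_trans (hτ a) (Nat.le_mul_of_pos_right _ (by omega))
      rw [← List.count_pos_iff]
      by_contra h2
      push_neg at h2
      interval_cases h0 : w'.count a
      omega
    obtain ⟨x, y, rfl, hax⟩ := exists_first_occ haw
    -- the letters before the first occurrence of a are independent of a
    have hxind : ∀ b ∈ x, I a b := by
      intro b hbx
      by_contra hnI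
      have hpe := proj_eq_of_te hirr hsym hnI h
      rw [proj_append, proj_expand, proj_expand, proj_cons] at hpe
      rw [if_pos (Or.inl rfl), expand_cons] at hpe
      rw [proj_append, proj_cons, if_pos (Or.inl rfl), expand_append, expand_cons] at hpe
      -- RHS starts with a letter of x, LHS starts with a
      have hbpx : b ∈ proj a b x := mem_proj.2 ⟨hbx, Or.inr rfl⟩
      have hbex : b ∈ expandWord τ (proj a b x) := (mem_expand hτ).2 hbpx
      obtain ⟨e, t, het⟩ := List.exists_cons_of_ne_nil (List.ne_nil_of_mem hbex)
      obtain ⟨k, hk⟩ := Nat.exists_eq_add_of_le (hτ a)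
      rw [het] at hpe
      rw [hk, Nat.add_comm, List.replicate_succ] at hpe
      simp only [List.cons_append] at hpe
      have hea : e = a := ((List.cons.inj hpe).1).symm
      have hex : e ∈ x := (mem_proj.1 (mem_of_mem_expand (het ▸ List.mem_cons_self (a := e) (l := t)))).1
      exact hax (hea ▸ hex)
    have hpeel : TE (x ++ a :: y) (a :: (x ++ y)) := te_move_front hsym hxind
    have h2 : TE (expandWord τ (a :: l') ++ D) (expandWord τ (a :: (x ++ y))) :=
      te_trans h (te_expand hsym hpeel)
    rw [expand_cons, expand_cons, List.append_assoc] at h2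
    have h3 : TE (expandWord τ l' ++ D) (expandWord τ (x ++ y)) := te_cancel_left hirr hsym h2
    obtain ⟨w'', hw1, hw2⟩ := ih D (x ++ y) h3
    exact ⟨w'', te_trans hpeel (te_cons a hw1), hw2⟩
/-! ### the one-tick shuffle -/

theorem tick_shuffle (hsym : Symmetric I)
    {p p' : E → ℕ} {q q' c l : List E}
    (hq : q.Nodup) (hq0 : ∀ x, 0 < p x ↔ x ∈ q)
    (hq' : q'.Nodup) (hq0' : ∀ x, 0 < p' x ↔ x ∈ q')
    (hc : c.Nodup) (hl : l.Nodup)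
    (hlc : ∀ x ∈ l, x ∈ c) (hq'qc : ∀ x ∈ q', x ∈ q ∨ x ∈ c)
    (hcnt : ∀ x, p x + (if x ∈ c then 1 else 0) = (if x ∈ l then τ x else 0) + p' x)
    (hind : ∀ a b : E, (a ∈ q ∨ a ∈ c) → (b ∈ q ∨ b ∈ c) → a ≠ b → I a b) :
    TE (Pl p q ++ c) (expandWord τ l ++ Pl p' q') := by
  have hmem : ∀ x ∈ Pl p q ++ c, x ∈ q ∨ x ∈ c := by
    intro x hx
    rcases List.mem_append.1 hx with h | h
    · exact Or.inl (mem_Pl h).1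
    · exact Or.inr h
  refine te_shuffle ?_ (fun a ha b hb hab => hind a b (hmem a ha) (hmem b hb) hab)
  rw [List.perm_iff_count]
  intro x
  rw [List.count_append, List.count_append, count_Pl hq hq0, count_Pl hq' hq0', count_expand]
  have hcc : c.count x = if x ∈ c then 1 else 0 := by
    by_cases h : x ∈ c
    · rw [if_pos h, List.count_eq_one_of_mem hc h]
    · rw [if_neg h, List.count_eq_zero_of_not_mem h]
  have hlcnt : l.count x = if x ∈ l then 1 else 0 := by
    by_cases h : x ∈ l
    · rw [if_pos h, List.count_eq_one_of_mem hl h]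
    · rw [if_neg h, List.count_eq_zero_of_not_mem h]
  rw [hcc, hlcnt]
  have := hcnt x
  by_cases h : x ∈ l <;> simp [h] at this ⊢ <;> omega
/-! ### direction A : from a tick path to a parallel process -/

theorem dirA_aux (hirr : Irreflexive I) (hsym : Symmetric I) (hτ : ∀ e, 1 ≤ τ e) :
    ∀ (n : ℕ) (c c' : S × (E → ℕ)), TickN Tran I τ n c c' →
    ∀ q : List E, q.Nodup → (∀ x, 0 < c.2 x ↔ x ∈ q) → (∀ x, c.2 x < τ x) →
    (∀ a ∈ q, ∀ b ∈ q, a ≠ b → I a b) → c'.2 = (fun _ => 0) →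
    ∃ m ≤ n, ∃ (w : List E) (M : List (List E)), ProcPath Tran c.1 w c'.1 ∧
      IsParProc I M ∧ M.length = m ∧ TE (Pl c.2 q ++ M.flatten) (expandWord τ w) := by
  intro n
  induction n with
  | zero =>
    intro c c' htn q hqnd hq0 _ _ hzero
    have hc : c' = c := htn
    have hqnil : q = [] := by
      rw [List.eq_nil_iff_forall_not_mem]
      intro x hx
      have h2 := (hq0 x).2 hx
      rw [← hc, hzero] at h2
      exact Nat.lt_irrefl 0 h2
    subst hqnil
    exact ⟨0, Nat.le_refl 0, [], [], by rw [hc]; exact ProcPath.nil c.1,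
      fun b hb => absurd hb (by simp), rfl, te_refl []⟩
  | succ n ih =>
    intro c c' htn q hqnd hq0 hplt hqind hzero
    obtain ⟨c₁, htick, htn'⟩ := htn
    obtain ⟨F, hF1, hF2, hF3, hF4, l, hlnd, hlfin, hlpp⟩ := htick
    by_cases hFe : F = ∅
    · -- idle tick
      subst hFe
      have hp1 : c₁.2 = c.2 := by
        funext x
        rw [hF4 x]
        simp
      have hlnil : l = [] := by
        have : l.toFinset = ∅ := by rw [hlfin]; simp
        exact (List.toFinset_eq_empty_iff l).1 this
      subst hlnil
      have hc1 : c₁ = c := by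
        have h1 := pp_nil_inv hlpp
        exact Prod.ext h1.symm hp1
      rw [hc1] at htn'
      obtain ⟨m, hm, w, M, h1, h2, h3, h4⟩ := ih c c' htn' q hqnd hq0 hplt hqind hzero
      exact ⟨m, Nat.le_succ_of_le hm, w, M, h1, h2, h3, h4⟩
    · -- a real tick
      have hmeml : ∀ x, x ∈ l ↔ x ∈ F ∧ c.2 x + 1 = τ x := by
        intro x
        rw [← List.mem_toFinset, hlfin, Finset.mem_filter]
      -- new support list
      set p₁ := c₁.2 with hp₁def
      have hp₁ : ∀ x, p₁ x = if x ∈ F then (if c.2 x + 1 = τ x then 0 else c.2 x + 1) else c.2 x :=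
        hF4
      set q₁ : List E := (q ++ F.toList).dedup.filter (fun x => decide (0 < p₁ x)) with hq₁def
      have hq₁nd : q₁.Nodup := (List.nodup_dedup _).filter _
      have hq₁0 : ∀ x, 0 < p₁ x ↔ x ∈ q₁ := by
        intro x
        constructor
        · intro hx
          rw [hq₁def, List.mem_filter]
          refine ⟨List.mem_dedup.2 (List.mem_append.2 ?_), by simpa using hx⟩
          by_cases hxF : x ∈ F
          · exact Or.inr (Finset.mem_toList.2 hxF)
          · left
            rw [hp₁ x, if_neg hxF] at hx
            exact (hq0 x).1 hx
        · intro hx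
          rw [hq₁def, List.mem_filter] at hx
          simpa using hx.2
      have hq₁sub : ∀ x ∈ q₁, x ∈ q ∨ x ∈ F := by
        intro x hx
        rw [hq₁def, List.mem_filter, List.mem_dedup, List.mem_append] at hx
        rcases hx.1 with h | h
        · exact Or.inl h
        · exact Or.inr (Finset.mem_toList.1 h)
      have hp₁lt : ∀ x, p₁ x < τ x := by
        intro x
        rw [hp₁ x]
        by_cases hxF : x ∈ F
        · rw [if_pos hxF]
          have h3 := hF3 x hxF
          by_cases hcom : c.2 x + 1 = τ x
          · rw [if_pos hcom]
            exact hτ x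
          · rw [if_neg hcom]
            omega
        · rw [if_neg hxF]; exact hplt x
      have hqF : ∀ a b : E, (a ∈ q ∨ a ∈ F) → (b ∈ q ∨ b ∈ F) → a ≠ b → I a b := by
        have key : ∀ a b : E, a ∈ F → b ∈ q → a ≠ b → I a b := by
          intro a b haF hbq hab
          rcases hF2 a haF with hpa | hind
          · exact hqind a ((hq0 a).1 hpa) b hbq hab
          · exact hind b ((hq0 b).2 hbq)
        intro a b ha hb hab
        rcases ha with ha | ha <;> rcases hb with hb | hb
        · exact hqind a ha b hb hab
        · exact hsym (key b a hb ha hab.symm)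
        · exact key a b ha hb hab
        · exact hF1 a ha b hb hab
      have hq₁ind : ∀ a ∈ q₁, ∀ b ∈ q₁, a ≠ b → I a b := by
        intro a ha b hb hab
        exact hqF a b (hq₁sub a ha) (hq₁sub b hb) hab
      obtain ⟨m, hm, w₁, M₁, hpp₁, hpar₁, hlen₁, hte₁⟩ :=
        ih c₁ c' htn' q₁ hq₁nd hq₁0 hp₁lt hq₁ind hzero
      refine ⟨m + 1, Nat.succ_le_succ hm, l ++ w₁, F.toList :: M₁, pp_append hlpp hpp₁, ?_, ?_, ?_⟩
      · intro b hb
        rcases List.mem_cons.1 hb with rfl | hb'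
        · constructor
          · rw [ne_eq, Finset.toList_eq_nil]
            exact hFe
          · exact List.Pairwise.imp_of_mem
              (fun ha hb hne => hF1 _ (Finset.mem_toList.1 ha) _ (Finset.mem_toList.1 hb) hne)
              (List.Pairwise.imp (fun h => h) (Finset.nodup_toList F))
        · exact hpar₁ b hb'
      · simp [hlen₁]
      · -- the trace equivalence
        have hshuf : TE (Pl c.2 q ++ F.toList) (expandWord τ l ++ Pl p₁ q₁) := by
          refine tick_shuffle hsym hqnd hq0 hq₁nd hq₁0 (Finset.nodup_toList F) hlnd
            (fun x hx => Finset.mem_toList.2 ((hmeml x).1 hx).1)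
            (fun x hx => (hq₁sub x hx).imp (fun h => h) (fun h => Finset.mem_toList.2 h)) ?_
            (fun a b ha hb hab => hqF a b
              (ha.imp (fun h => h) (fun h => Finset.mem_toList.1 h))
              (hb.imp (fun h => h) (fun h => Finset.mem_toList.1 h)) hab)
          intro x
          rw [hp₁ x]
          by_cases hxF : x ∈ F
          · by_cases hcom : c.2 x + 1 = τ x
            · have hxl : x ∈ l := (hmeml x).2 ⟨hxF, hcom⟩
              rw [if_pos (Finset.mem_toList.2 hxF), if_pos hxl, if_pos hxF, if_pos hcom]
              omega
            · have hxl : x ∉ l := fun h => hcom ((hmeml x).1 h).2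
              rw [if_pos (Finset.mem_toList.2 hxF), if_neg hxl, if_pos hxF, if_neg hcom]
              omega
          · have hxl : x ∉ l := fun h => hxF ((hmeml x).1 h).1
            rw [if_neg (fun h => hxF (Finset.mem_toList.1 h)), if_neg hxl, if_neg hxF]
            omega
        rw [expand_append, List.flatten_cons, ← List.append_assoc]
        refine te_trans (te_append_right hshuf M₁.flatten) ?_
        rw [List.append_assoc]
        exact te_append_left hte₁ (expandWord τ l)
/-! ### direction B : from a parallel process to a tick path -/

theorem dirB_aux (hirr : Irreflexive I) (hsym : Symmetric I) (hτ : ∀ e, 1 ≤ τ e)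
    (comm : ∀ a b s s' s'', I a b → Tran s a s' → Tran s' b s'' →
      ∃ s₁, Tran s b s₁ ∧ Tran s₁ a s'') (s : S) :
    ∀ (M : List (List E)) (p : E → ℕ) (q : List E) (s₁ : S) (w' : List E),
    q.Nodup → (∀ x, 0 < p x ↔ x ∈ q) → (∀ x, p x < τ x) →
    (∀ a ∈ q, ∀ b ∈ q, a ≠ b → I a b) →
    IsParProc I M → ProcPath Tran s₁ w' s →
    TE (Pl p q ++ M.flatten) (expandWord τ w') →
    TickN Tran I τ M.length (s₁, p) (s, fun _ => 0) := by
  intro M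
  induction M with
  | nil =>
    intro p q s₁ w' hqnd hq0 hplt hqind hpar hpp hte
    rw [List.flatten_nil, List.append_nil] at hte
    have hcnt := List.perm_iff_count.1 (te_perm hte)
    -- w' must be empty
    have hw : w' = [] := by
      rw [List.eq_nil_iff_forall_not_mem]
      intro x hx
      have h1 := hcnt x
      rw [count_Pl hqnd hq0, count_expand] at h1
      have h2 : 1 ≤ w'.count x := List.count_pos_iff.2 hx
      have h3 := hplt x
      have h4 : τ x ≤ τ x * w'.count x := Nat.le_mul_of_pos_right _ (by omega)
      omega
    subst hw
    have hp0 : p = fun _ => 0 := by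
      funext x
      have h1 := hcnt x
      rw [count_Pl hqnd hq0] at h1
      simpa [expandWord] using h1
    have hs : s₁ = s := pp_nil_inv hpp
    show (s, fun _ => (0:ℕ)) = (s₁, p)
    rw [hs, hp0]
  | cons c M' ih =>
    intro p q s₁ w' hqnd hq0 hplt hqind hpar hpp hte
    obtain ⟨hcne, hcpair⟩ := hpar c (List.mem_cons_self (a := c) (l := M'))
    have hcnd : c.Nodup := by
      refine List.Pairwise.imp ?_ hcpair
      intro a b hI h
      subst h
      exact hirr a hI
    have hcpw : ∀ a ∈ c, ∀ b ∈ c, a ≠ b → I a b := fun a ha b hb hab =>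
      haveI : Std.Symm I := ⟨fun _ _ h => hsym h⟩; List.Pairwise.forall hcpair ha hb hab
    rw [List.flatten_cons] at hte
    -- freshness: a newly started letter is independent of all in-progress ones
    have hfresh : ∀ a ∈ c, p a = 0 → ∀ b, 0 < p b → I a b := by
      intro a hac hpa b hpb
      by_cases hbc : b ∈ c
      · exact hcpw a hac b hbc (fun h => by rw [h] at hpa; omega)
      · by_contra hnI
        have hba : b ≠ a := fun h => by rw [h, hpa] at hpb; exact Nat.lt_irrefl 0 hpb
        have hpe := proj_eq_of_te hirr hsym hnI hte
        rw [proj_append, proj_append, proj_expand] at hpe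
        -- split proj a b c at the occurrence of a
        have hapc : a ∈ proj a b c := mem_proj.2 ⟨hac, Or.inl rfl⟩
        obtain ⟨x₁, x₂, hx⟩ := List.append_of_mem hapc
        rw [hx] at hpe
        have hsplit : expandWord τ (proj a b w') =
            (proj a b (Pl p q) ++ x₁) ++ a :: (x₂ ++ proj a b M'.flatten) := by
          rw [← hpe]
          simp [List.append_assoc]
        have hmod := count_mod_of_expand_split hba _ _ _ hsplit
        -- count b in the prefix is p b
        have hcb1 : (proj a b (Pl p q)).count b = p b := by
          rw [proj, List.count_filter (by simp), count_Pl hqnd hq0]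
        have hcb2 : x₁.count b = 0 := by
          have h1 : (proj a b c).count b = 0 := by
            rw [proj, List.count_filter (by simp), List.count_eq_zero_of_not_mem hbc]
          rw [hx, List.count_append] at h1
          omega
        rw [List.count_append, hcb1, hcb2] at hmod
        have := hplt b
        rw [Nat.mod_eq_of_lt (by omega)] at hmod
        omega
    -- the tick data
    set F : Finset E := c.toFinset with hFdef
    have hmemF : ∀ x, x ∈ F ↔ x ∈ c := fun x => List.mem_toFinset
    have hF1 : ∀ a ∈ F, ∀ b ∈ F, a ≠ b → I a b := fun a ha b hb hab =>
      hcpw a ((hmemF a).1 ha) b ((hmemF b).1 hb) hab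
    have hF2 : ∀ a ∈ F, 0 < p a ∨ ∀ b, 0 < p b → I a b := by
      intro a ha
      by_cases hpa : 0 < p a
      · exact Or.inl hpa
      · exact Or.inr (hfresh a ((hmemF a).1 ha) (by omega))
    have hF3 : ∀ a ∈ F, p a < τ a := fun a _ => hplt a
    set p' : E → ℕ := fun x => if x ∈ F then (if p x + 1 = τ x then 0 else p x + 1) else p x
      with hp'def
    set l : List E := c.filter (fun x => decide (p x + 1 = τ x)) with hldef
    have hlnd : l.Nodup := hcnd.filter _
    have hmeml : ∀ x, x ∈ l ↔ x ∈ c ∧ p x + 1 = τ x := by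
      intro x
      rw [hldef, List.mem_filter]
      simp
    have hlfin : l.toFinset = F.filter (fun a => p a + 1 = τ a) := by
      ext x
      rw [List.mem_toFinset, hmeml, Finset.mem_filter, hmemF]
    -- new support list
    set q' : List E := (q ++ c).dedup.filter (fun x => decide (0 < p' x)) with hq'def
    have hq'nd : q'.Nodup := (List.nodup_dedup _).filter _
    have hq'0 : ∀ x, 0 < p' x ↔ x ∈ q' := by
      intro x
      constructor
      · intro hx
        rw [hq'def, List.mem_filter]
        refine ⟨List.mem_dedup.2 (List.mem_append.2 ?_), by simpa using hx⟩
        by_cases hxF : x ∈ F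
        · exact Or.inr ((hmemF x).1 hxF)
        · left
          rw [hp'def] at hx
          simp only [hxF, if_neg, if_false] at hx
          exact (hq0 x).1 hx
      · intro hx
        rw [hq'def, List.mem_filter] at hx
        simpa using hx.2
    have hq'sub : ∀ x ∈ q', x ∈ q ∨ x ∈ c := by
      intro x hx
      rw [hq'def, List.mem_filter, List.mem_dedup, List.mem_append] at hx
      exact hx.1
    have hp'lt : ∀ x, p' x < τ x := by
      intro x
      rw [hp'def]
      simp only []
      by_cases hxF : x ∈ F
      · rw [if_pos hxF]
        by_cases hcom : p x + 1 = τ x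
        · rw [if_pos hcom]; exact hτ x
        · rw [if_neg hcom]; have := hplt x; omega
      · rw [if_neg hxF]; exact hplt x
    have hqc : ∀ a b : E, (a ∈ q ∨ a ∈ c) → (b ∈ q ∨ b ∈ c) → a ≠ b → I a b := by
      have key : ∀ a b : E, a ∈ c → b ∈ q → a ≠ b → I a b := by
        intro a b hac hbq hab
        by_cases hpa : 0 < p a
        · exact hqind a ((hq0 a).1 hpa) b hbq hab
        · exact hfresh a hac (by omega) b ((hq0 b).2 hbq)
      intro a b ha hb hab
      rcases ha with ha | ha <;> rcases hb with hb | hb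
      · exact hqind a ha b hb hab
      · exact hsym (key b a hb ha hab.symm)
      · exact key a b ha hb hab
      · exact hcpw a ha b hb hab
    have hq'ind : ∀ a ∈ q', ∀ b ∈ q', a ≠ b → I a b := fun a ha b hb hab =>
      hqc a b (hq'sub a ha) (hq'sub b hb) hab
    -- the shuffle
    have hshuf : TE (Pl p q ++ c) (expandWord τ l ++ Pl p' q') := by
      refine tick_shuffle hsym hqnd hq0 hq'nd hq'0 hcnd hlnd
        (fun x hx => ((hmeml x).1 hx).1) hq'sub ?_ hqc
      intro x
      rw [hp'def]
      simp only []
      by_cases hxc : x ∈ c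
      · have hxF : x ∈ F := (hmemF x).2 hxc
        by_cases hcom : p x + 1 = τ x
        · have hxl : x ∈ l := (hmeml x).2 ⟨hxc, hcom⟩
          rw [if_pos hxc, if_pos hxl, if_pos hxF, if_pos hcom]
          omega
        · have hxl : x ∉ l := fun h => hcom ((hmeml x).1 h).2
          rw [if_pos hxc, if_neg hxl, if_pos hxF, if_neg hcom]
          omega
      · have hxF : x ∉ F := fun h => hxc ((hmemF x).1 h)
        have hxl : x ∉ l := fun h => hxc ((hmeml x).1 h).1
        rw [if_neg hxc, if_neg hxl, if_neg hxF]
        omega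
    -- rearrange and peel
    have h2 : TE (expandWord τ l ++ (Pl p' q' ++ M'.flatten)) (expandWord τ w') := by
      rw [← List.append_assoc] at hte ⊢
      exact te_trans (te_symm (te_append_right hshuf M'.flatten)) hte
    obtain ⟨w'', hw1, hw2⟩ := peel_expand hirr hsym hτ l (Pl p' q' ++ M'.flatten) w' h2
    have hpp' : ProcPath Tran s₁ (l ++ w'') s := pp_te hsym comm hw1 hpp
    obtain ⟨s₂, hlpp, hw''pp⟩ := pp_append_inv hpp'
    have htn' : TickN Tran I τ M'.length (s₂, p') (s, fun _ => 0) :=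
      ih p' q' s₂ w'' hq'nd hq'0 hp'lt hq'ind
        (fun b hb => hpar b (List.mem_cons_of_mem c hb)) hw''pp hw2
    refine ⟨(s₂, p'), ⟨F, hF1, hF2, hF3, fun a => rfl, l, hlnd, hlfin, hlpp⟩, htn'⟩

end SP18

/-- in the graph on `S_τ`, the length of a shortest directed path
from `(s₀,1)` to `(s,1)` equals the minimum, over all traces `μ` with
`s₀·μ = s`, of the execution time of a parallel process realizing `μ` with
time function `τ` (i.e. the minimal number of steps of a factorization of the
`τ`-expanded trace into blocks of pairwise independent letters). -/
theorem shortest_path_eq_min_time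
    {S E : Type} [DecidableEq E]
    (I : E → E → Prop) (hirr : Irreflexive I) (hsym : Symmetric I)
    (Tran : S → E → S → Prop)
    (det : ∀ s e s' s'', Tran s e s' → Tran s e s'' → s' = s'')
    (comm : ∀ a b s s' s'', I a b → Tran s a s' → Tran s' b s'' →
      ∃ s₁, Tran s b s₁ ∧ Tran s₁ a s'')
    (τ : E → ℕ) (hτ : ∀ e, 1 ≤ τ e)
    (s₀ s : S) (d : ℕ) :
    IsLeast {n : ℕ | TickN Tran I τ n (s₀, fun _ => 0) (s, fun _ => 0)} d ↔
    IsLeast {m : ℕ | ∃ w : List E, ProcPath Tran s₀ w s ∧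
      ∃ M : List (List E), IsParProc I M ∧
        TraceEquiv I M.flatten (expandWord τ w) ∧ M.length = m} d := by
  have hBA : ∀ m : ℕ, (∃ w : List E, ProcPath Tran s₀ w s ∧
      ∃ M : List (List E), IsParProc I M ∧
        TraceEquiv I M.flatten (expandWord τ w) ∧ M.length = m) →
      TickN Tran I τ m (s₀, fun _ => 0) (s, fun _ => 0) := by
    intro m hm
    obtain ⟨w, hpp, M, hpar, hte, hlen⟩ := hm
    have h := SP18.dirB_aux hirr hsym hτ comm s M (fun _ => 0) [] s₀ w
      List.nodup_nil (by simp) (fun x => hτ x) (by simp) hpar hpp (by simpa [SP18.Pl] using hte)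
    rw [hlen] at h
    exact h
  have hAB : ∀ n : ℕ, TickN Tran I τ n (s₀, fun _ => 0) (s, fun _ => 0) →
      ∃ m ≤ n, (∃ w : List E, ProcPath Tran s₀ w s ∧
      ∃ M : List (List E), IsParProc I M ∧
        TraceEquiv I M.flatten (expandWord τ w) ∧ M.length = m) := by
    intro n hn
    obtain ⟨m, hmn, w, M, hpp, hpar, hlen, hte⟩ := SP18.dirA_aux hirr hsym hτ n _ _ hn []
      List.nodup_nil (by simp) (fun x => hτ x) (by simp) rfl
    exact ⟨m, hmn, w, hpp, M, hpar, by simpa [SP18.Pl] using hte, hlen⟩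
  constructor
  · rintro ⟨hdA, hlb⟩
    obtain ⟨m, hmd, hmB⟩ := hAB d hdA
    have hdm : d ≤ m := hlb (hBA m hmB)
    have hmd' : m = d := le_antisymm hmd hdm
    exact ⟨hmd' ▸ hmB, fun x hx => hlb (hBA x hx)⟩
  · rintro ⟨hdB, hlb⟩
    refine ⟨hBA d hdB, fun x hx => ?_⟩
    obtain ⟨m, hmx, hmB⟩ := hAB x hx
    exact le_trans (hlb hmB) hmx
end
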